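/- Let V be an indecomposable metric 3-Lie algebra which is neither one-dimensional nor simple (it has an ideal other than 0 and V). Then V possesses an ideal I such that: I is isotropic (I ⊆ I⊥); [I, I⊥, V] = 0, and in particular [I,I,V] = 0; I⊥ is a maximal coisotropic ideal; the pairing between the quotient V/I⊥ and I induced by ⟨−,−⟩ is nondegenerate, so dim I = dim(V/I⊥); the quotient 3-Lie algebra V/I⊥ is either one-dimensional or has no ideals other than 0 and itself; and the quotient I⊥/I carries an induced metric 3-Lie algebra structure, with 3-bracket induced from that of V and nondegenerate ad-invariant form induced from ⟨−,−⟩. (Thus V is a double extension of the metric 3-Lie algebra I⊥/I by the one-dimensional or simple 3-Lie algebra V/I⊥.) -/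

import Mathlib

set_option maxHeartbeats 2000000

open LinearMap.BilinForm Module

/-- Structure theorem: an indecomposable metric 3-Lie algebra which is neither
one-dimensional nor simple possesses an isotropic ideal `I` with `[I,I⊥,V] = 0`
(in particular `[I,I,V] = 0`), whose orthogonal complement `I⊥` is a maximal coisotropic
ideal, the pairing between `V/I⊥` and `I` induced by the metric is nondegenerate (so
`dim I = dim V/I⊥`), the quotient `V/I⊥` is a 3-Lie algebra which is one-dimensional or
has no proper ideals, and `I⊥/I` inherits a metric 3-Lie algebra structure.  Thus `V` is
a double extension of `I⊥/I` by the one-dimensional or simple 3-Lie algebra `V/I⊥`. -/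
theorem metric_threeLie_double_extension
    (V : Type*) [AddCommGroup V] [Module ℝ V] [FiniteDimensional ℝ V]
    (f : V →ₗ[ℝ] V →ₗ[ℝ] V →ₗ[ℝ] V)
    (hA1 : ∀ x y z : V, f x y z = - f y x z)
    (hA2 : ∀ x y z : V, f x y z = - f x z y)
    (hFI : ∀ x y z s t : V,
      f x y (f z s t) = f (f x y z) s t + f z (f x y s) t + f z s (f x y t))
    (ip : V →ₗ[ℝ] V →ₗ[ℝ] ℝ)
    (hipsymm : ∀ u v : V, ip u v = ip v u)
    (hipnondeg : ∀ u : V, (∀ v : V, ip u v = 0) → u = 0)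
    (hipinv : ∀ x y z s : V, ip (f x y z) s + ip z (f x y s) = 0)
    (hIndec : ∀ J : Submodule ℝ V, (∀ x ∈ J, ∀ y z : V, f x y z ∈ J) →
      J ⊓ LinearMap.BilinForm.orthogonal ip J = ⊥ → J = ⊥ ∨ J = ⊤)
    (hProper : ∃ I : Submodule ℝ V, (∀ x ∈ I, ∀ y z : V, f x y z ∈ I) ∧ I ≠ ⊥ ∧ I ≠ ⊤) :
    ∃ I : Submodule ℝ V,
      let O : Submodule ℝ V := LinearMap.BilinForm.orthogonal ip I
      (∀ x ∈ I, ∀ y z : V, f x y z ∈ I) ∧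
      I ≤ O ∧
      (∀ x ∈ I, ∀ y ∈ O, ∀ z : V, f x y z = 0) ∧
      (∀ x ∈ I, ∀ y ∈ I, ∀ z : V, f x y z = 0) ∧
      (∀ x ∈ O, ∀ y z : V, f x y z ∈ O) ∧
      LinearMap.BilinForm.orthogonal ip O ≤ O ∧
      (∀ J : Submodule ℝ V, (∀ x ∈ J, ∀ y z : V, f x y z ∈ J) → O ≤ J →
        J = O ∨ J = ⊤) ∧
      (∀ x : V, (∀ s ∈ I, ip x s = 0) → x ∈ O) ∧
      (∀ s ∈ I, (∀ x : V, ip x s = 0) → s = 0) ∧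
      Module.finrank ℝ ↥I = Module.finrank ℝ (V ⧸ O) ∧
      (∃ fbar : (V ⧸ O) →ₗ[ℝ] (V ⧸ O) →ₗ[ℝ] (V ⧸ O) →ₗ[ℝ] (V ⧸ O),
        (∀ x y z : V,
          fbar (Submodule.Quotient.mk x) (Submodule.Quotient.mk y)
              (Submodule.Quotient.mk z) = Submodule.Quotient.mk (f x y z)) ∧
        (Module.finrank ℝ (V ⧸ O) = 1 ∨
          ∀ J : Submodule ℝ (V ⧸ O), (∀ a ∈ J, ∀ b c : V ⧸ O, fbar a b c ∈ J) →
            J = ⊥ ∨ J = ⊤)) ∧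
      (∃ (fQ : (↥O ⧸ Submodule.comap O.subtype I) →ₗ[ℝ]
               (↥O ⧸ Submodule.comap O.subtype I) →ₗ[ℝ]
               (↥O ⧸ Submodule.comap O.subtype I) →ₗ[ℝ]
               (↥O ⧸ Submodule.comap O.subtype I))
         (ipQ : (↥O ⧸ Submodule.comap O.subtype I) →ₗ[ℝ]
                (↥O ⧸ Submodule.comap O.subtype I) →ₗ[ℝ] ℝ),
        (∀ x y z w : ↥O, (w : V) = f x y z →
          fQ (Submodule.Quotient.mk x) (Submodule.Quotient.mk y)
              (Submodule.Quotient.mk z) = Submodule.Quotient.mk w) ∧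
        (∀ x y : ↥O,
          ipQ (Submodule.Quotient.mk x) (Submodule.Quotient.mk y) = ip (x : V) (y : V)) ∧
        (∀ a b c : ↥O ⧸ Submodule.comap O.subtype I, fQ a b c = - fQ b a c) ∧
        (∀ a b c : ↥O ⧸ Submodule.comap O.subtype I, fQ a b c = - fQ a c b) ∧
        (∀ a b c d e : ↥O ⧸ Submodule.comap O.subtype I,
          fQ a b (fQ c d e) = fQ (fQ a b c) d e + fQ c (fQ a b d) e + fQ c d (fQ a b e)) ∧
        (∀ a b : ↥O ⧸ Submodule.comap O.subtype I, ipQ a b = ipQ b a) ∧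
        (∀ a : ↥O ⧸ Submodule.comap O.subtype I,
          (∀ b : ↥O ⧸ Submodule.comap O.subtype I, ipQ a b = 0) → a = 0) ∧
        (∀ a b c d : ↥O ⧸ Submodule.comap O.subtype I,
          ipQ (fQ a b c) d + ipQ c (fQ a b d) = 0)) := by
  classical
  have cyc : ∀ x y z : V, f x y z = f y z x := by
    intro x y z
    rw [hA2 x y z, hA1 x z y, neg_neg, hA2 z x y, hA1 z y x, neg_neg]
  have hrefl : LinearMap.IsRefl ip := fun x y h => by rw [hipsymm]; exact h
  have hnd : LinearMap.BilinForm.Nondegenerate ip :=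
    ⟨hipnondeg, fun y h => hipnondeg y (fun v => by rw [hipsymm]; exact h v)⟩
  -- the orthogonal complement of an ideal is an ideal
  have horthideal : ∀ J : Submodule ℝ V, (∀ x ∈ J, ∀ y z : V, f x y z ∈ J) →
      ∀ x ∈ LinearMap.BilinForm.orthogonal ip J, ∀ y z : V,
        f x y z ∈ LinearMap.BilinForm.orthogonal ip J := by
    intro J hJ x hx y z n hn
    show ip n (f x y z) = 0
    have h1 : ip (f y z x) n + ip x (f y z n) = 0 := hipinv y z x n
    have h3 : ip (f n y z) x = 0 := hx (f n y z) (hJ n hn y z)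
    have h4 : ip x (f y z n) = 0 := by rw [cyc n y z, hipsymm] at h3; exact h3
    rw [hipsymm, cyc x y z]
    linarith
  -- choose a minimal ideal I inside the given proper ideal
  obtain ⟨K0, hK0id, hK0bot, hK0top⟩ := hProper
  have hex : ∃ n : ℕ, ∃ J : Submodule ℝ V,
      ((∀ x ∈ J, ∀ y z : V, f x y z ∈ J) ∧ J ≠ ⊥ ∧ J ≤ K0) ∧ Module.finrank ℝ J = n :=
    ⟨_, K0, ⟨hK0id, hK0bot, le_rfl⟩, rfl⟩
  obtain ⟨I, ⟨hIid, hIbot, hIK0⟩, hIrank⟩ := Nat.find_spec hex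
  have hImin : ∀ J : Submodule ℝ V, (∀ x ∈ J, ∀ y z : V, f x y z ∈ J) →
      J ≠ ⊥ → J ≤ I → J = I := by
    intro J hJid hJbot hJI
    have h1 : Nat.find hex ≤ Module.finrank ℝ J :=
      Nat.find_le ⟨J, ⟨hJid, hJbot, hJI.trans hIK0⟩, rfl⟩
    exact Submodule.eq_of_le_of_finrank_le hJI (by omega)
  have hItop : I ≠ ⊤ := fun h => hK0top (top_le_iff.mp (h ▸ hIK0))
  have hOid : ∀ x ∈ LinearMap.BilinForm.orthogonal ip I, ∀ y z : V,
      f x y z ∈ LinearMap.BilinForm.orthogonal ip I := horthideal I hIid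
  -- I is isotropic
  have hIO : I ≤ LinearMap.BilinForm.orthogonal ip I := by
    by_contra hne
    have hio : ∀ x ∈ I ⊓ LinearMap.BilinForm.orthogonal ip I, ∀ y z : V,
        f x y z ∈ I ⊓ LinearMap.BilinForm.orthogonal ip I :=
      fun x hx y z => ⟨hIid x hx.1 y z, hOid x hx.2 y z⟩
    have hbot : I ⊓ LinearMap.BilinForm.orthogonal ip I = ⊥ := by
      by_contra hb
      have h := hImin _ hio hb inf_le_left
      exact hne ((le_of_eq h.symm).trans inf_le_right)
    rcases hIndec I hIid hbot with h | h
    · exact hIbot h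
    · exact hItop h
  -- [I, O, V] = 0
  have hIOV : ∀ x ∈ I, ∀ y ∈ LinearMap.BilinForm.orthogonal ip I, ∀ z : V, f x y z = 0 := by
    intro x hx y hy z
    apply hipnondeg
    intro s
    have h1 : ip (f y z x) s + ip x (f y z s) = 0 := hipinv y z x s
    have h2 : ip x (f y z s) = 0 := hOid y hy z s x hx
    rw [cyc x y z]
    linarith
  have hOO : LinearMap.BilinForm.orthogonal ip (LinearMap.BilinForm.orthogonal ip I) = I :=
    orthogonal_orthogonal hnd hrefl I
  -- maximality of O
  have hmax : ∀ J : Submodule ℝ V, (∀ x ∈ J, ∀ y z : V, f x y z ∈ J) →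
      LinearMap.BilinForm.orthogonal ip I ≤ J →
      J = LinearMap.BilinForm.orthogonal ip I ∨ J = ⊤ := by
    intro J hJid hOJ
    by_cases hJb : LinearMap.BilinForm.orthogonal ip J = ⊥
    · right
      rcases hIndec J hJid (by rw [hJb, inf_bot_eq]) with h | h
      · exact absurd (le_bot_iff.mp ((hIO.trans hOJ).trans h.le)) hIbot
      · exact h
    · left
      have h1 : LinearMap.BilinForm.orthogonal ip J ≤ I := by
        have h := LinearMap.BilinForm.orthogonal_le (B := ip) hOJ
        rwa [hOO] at h
      have h3 : LinearMap.BilinForm.orthogonal ip J = I :=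
        hImin _ (horthideal J hJid) hJb h1
      have h4 : J ≤ LinearMap.BilinForm.orthogonal ip I := by
        have h := le_orthogonal_orthogonal (B := ip) hrefl (N := J)
        rwa [h3] at h
      exact le_antisymm h4 hOJ
  -- dimension count
  have hrank : Module.finrank ℝ ↥I =
      Module.finrank ℝ (V ⧸ LinearMap.BilinForm.orthogonal ip I) := by
    have h1 := Submodule.finrank_quotient_add_finrank (LinearMap.BilinForm.orthogonal ip I)
    have h2 : Module.finrank ℝ ↥(LinearMap.BilinForm.orthogonal ip I) =
        Module.finrank ℝ V - Module.finrank ℝ ↥I := finrank_orthogonal hnd I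
    have h3 : Module.finrank ℝ ↥I ≤ Module.finrank ℝ V := I.finrank_le
    omega
  set Oo := LinearMap.BilinForm.orthogonal ip I with hOodef
  set KK := Submodule.comap Oo.subtype I with hKKdef
  -- third-slot closure of O
  have hOid3 : ∀ x y : V, ∀ c ∈ Oo,
      f x y c ∈ Oo := by
    intro x y c hc
    rw [cyc x y c, cyc y c x]
    exact hOid c hc x y
  -- section of the quotient map V → V/O
  obtain ⟨σ, hσeq⟩ := (Oo).mkQ.exists_rightInverse_of_surjective
    (by rw [Submodule.range_mkQ])
  have hσ : ∀ a, (Oo).mkQ (σ a) = a :=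
    fun a => by simpa using LinearMap.congr_fun hσeq a
  have hσmem : ∀ x : V,
      σ ((Oo).mkQ x) - x ∈ Oo := by
    intro x
    rw [← Submodule.Quotient.mk_eq_zero, ← Submodule.mkQ_apply, map_sub, hσ, sub_self]
  obtain ⟨fbar, hfbar0⟩ : ∃ F : (V ⧸ Oo) →ₗ[ℝ]
      (V ⧸ Oo) →ₗ[ℝ]
      (V ⧸ Oo) →ₗ[ℝ]
      (V ⧸ Oo),
      ∀ a b c, F a b c = (Oo).mkQ (f (σ a) (σ b) (σ c)) := by
    refine ⟨LinearMap.mk₂ ℝ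
      (fun a b => (Oo).mkQ ∘ₗ (f (σ a) (σ b)) ∘ₗ σ)
      ?_ ?_ ?_ ?_, fun a b c => rfl⟩
    · intro a a' b; ext c; simp [map_add]
    · intro r a b; ext c; simp
    · intro a b b'; ext c; simp [map_add]
    · intro r a b; ext c; simp
  have hcong : ∀ x x' y y' z z' : V, x - x' ∈ Oo →
      y - y' ∈ Oo →
      z - z' ∈ Oo →
      f x y z - f x' y' z' ∈ Oo := by
    intro x x' y y' z z' hx hy hz
    have e : f x y z - f x' y' z' = f (x - x') y z + f x' (y - y') z + f x' y' (z - z') := by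
      simp only [map_sub, LinearMap.sub_apply]
      abel
    rw [e]
    refine Submodule.add_mem _ (Submodule.add_mem _ ?_ ?_) ?_
    · exact hOid _ hx y z
    · rw [hA1]; exact Submodule.neg_mem _ (hOid _ hy x' z)
    · exact hOid3 x' y' _ hz
  have hfbar : ∀ x y z : V,
      fbar (Submodule.Quotient.mk x) (Submodule.Quotient.mk y) (Submodule.Quotient.mk z) =
        Submodule.Quotient.mk (f x y z) := by
    intro x y z
    have h := hfbar0 ((Oo).mkQ x)
      ((Oo).mkQ y) ((Oo).mkQ z)
    simp only [Submodule.mkQ_apply] at h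
    rw [h, Submodule.Quotient.eq]
    exact hcong _ _ _ _ _ _ (hσmem x) (hσmem y) (hσmem z)
  -- quotient has no proper ideals
  have hsimple : ∀ J : Submodule ℝ (V ⧸ Oo),
      (∀ a ∈ J, ∀ b c, fbar a b c ∈ J) → J = ⊥ ∨ J = ⊤ := by
    intro J hJ
    set J' := J.comap (Oo).mkQ with hJ'def
    have hJ'id : ∀ x ∈ J', ∀ y z : V, f x y z ∈ J' := by
      intro x hx y z
      simp only [hJ'def, Submodule.mem_comap, Submodule.mkQ_apply] at *
      rw [← hfbar]
      exact hJ _ hx _ _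
    have hOJ : Oo ≤ J' := by
      intro x hx
      simp only [hJ'def, Submodule.mem_comap, Submodule.mkQ_apply]
      rw [(Submodule.Quotient.mk_eq_zero _).2 hx]
      exact J.zero_mem
    have hJmap : J = J'.map (Oo).mkQ :=
      (Submodule.map_comap_eq_of_surjective (Submodule.mkQ_surjective _) J).symm
    rcases hmax J' hJ'id hOJ with h | h
    · left
      rw [hJmap, h, eq_bot_iff]
      rintro y ⟨x, hx, rfl⟩
      simpa using (Submodule.Quotient.mk_eq_zero _).2 hx
    · right
      rw [hJmap, h, Submodule.map_top, Submodule.range_mkQ]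
  -- restricted bracket on O
  obtain ⟨m, hm⟩ : ∃ m : ↥(Oo) →ₗ[ℝ]
      ↥(Oo) →ₗ[ℝ]
      ↥(Oo) →ₗ[ℝ] ↥(Oo),
      ∀ x y z, ((m x y z : V)) = f x y z := by
    refine ⟨LinearMap.mk₂ ℝ (fun x y => LinearMap.codRestrict _
      ((f (x : V) (y : V)).comp (Oo).subtype)
      (fun c => hOid3 x y c c.2)) ?_ ?_ ?_ ?_, fun x y z => rfl⟩
    · intro x x' y; apply LinearMap.ext; intro c; apply Subtype.ext; simp [map_add]; rfl
    · intro r x y; apply LinearMap.ext; intro c; apply Subtype.ext; simp; rfl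
    · intro x y y'; apply LinearMap.ext; intro c; apply Subtype.ext; simp [map_add]; rfl
    · intro r x y; apply LinearMap.ext; intro c; apply Subtype.ext; simp; rfl
  have hmK1 : ∀ d y z : Oo, d ∈ KK → m d y z = 0 := by
    intro d y z hd
    apply Subtype.ext
    rw [hm]
    exact hIOV _ hd _ y.2 _
  have hmK2 : ∀ x d z : Oo, d ∈ KK → m x d z = 0 := by
    intro x d z hd
    have hd' : (d : V) ∈ I := hd
    apply Subtype.ext
    rw [hm]
    show f (x : V) (d : V) (z : V) = (0 : V)
    rw [hA1, show f (d : V) (x : V) (z : V) = 0 from hIOV _ hd' _ x.2 _, neg_zero]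
  have hmK3 : ∀ x y d : Oo, d ∈ KK → m x y d = 0 := by
    intro x y d hd
    apply Subtype.ext
    rw [hm]
    show f (x : V) (y : V) (d : V) = (0 : V)
    rw [cyc (x : V) y d, cyc (y : V) d x]
    exact hIOV _ hd _ x.2 _

  have hcongm : ∀ x x' y y' z z' : Oo, x - x' ∈ KK → y - y' ∈ KK → z - z' ∈ KK →
      m x y z = m x' y' z' := by
    intro x x' y y' z z' hx hy hz
    have e : m x y z - m x' y' z' = m (x - x') y z + m x' (y - y') z + m x' y' (z - z') := by
      simp only [map_sub, LinearMap.sub_apply]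
      abel
    have e2 : m x y z - m x' y' z' = 0 := by
      rw [e, hmK1 _ _ _ hx, hmK2 _ _ _ hy, hmK3 _ _ _ hz]
      simp
    exact sub_eq_zero.mp e2
  -- section of the quotient map O → O/K
  obtain ⟨τ, hτeq⟩ := KK.mkQ.exists_rightInverse_of_surjective (by rw [Submodule.range_mkQ])
  have hτ : ∀ a, KK.mkQ (τ a) = a := fun a => by simpa using LinearMap.congr_fun hτeq a
  have hτmem : ∀ x : Oo, τ (KK.mkQ x) - x ∈ KK := by
    intro x
    rw [← Submodule.Quotient.mk_eq_zero, ← Submodule.mkQ_apply, map_sub, hτ, sub_self]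
  obtain ⟨fQ, hfQ0⟩ : ∃ F : (↥Oo ⧸ KK) →ₗ[ℝ] (↥Oo ⧸ KK) →ₗ[ℝ] (↥Oo ⧸ KK) →ₗ[ℝ] (↥Oo ⧸ KK),
      ∀ a b c, F a b c = KK.mkQ (m (τ a) (τ b) (τ c)) := by
    refine ⟨LinearMap.mk₂ ℝ (fun a b => KK.mkQ ∘ₗ (m (τ a) (τ b)) ∘ₗ τ) ?_ ?_ ?_ ?_,
      fun a b c => rfl⟩
    · intro a a' b; ext c; simp [map_add]
    · intro r a b; ext c; simp
    · intro a b b'; ext c; simp [map_add]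
    · intro r a b; ext c; simp
  have hfQm : ∀ x y z : Oo, fQ (Submodule.Quotient.mk x) (Submodule.Quotient.mk y)
      (Submodule.Quotient.mk z) = Submodule.Quotient.mk (m x y z) := by
    intro x y z
    have h := hfQ0 (KK.mkQ x) (KK.mkQ y) (KK.mkQ z)
    simp only [Submodule.mkQ_apply] at h
    rw [h]
    congr 1
    exact hcongm _ _ _ _ _ _ (hτmem x) (hτmem y) (hτmem z)
  obtain ⟨ipQ, hipQ0⟩ : ∃ P : (↥Oo ⧸ KK) →ₗ[ℝ] (↥Oo ⧸ KK) →ₗ[ℝ] ℝ,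
      ∀ a b, P a b = ip ((τ a : Oo) : V) ((τ b : Oo) : V) := by
    refine ⟨LinearMap.mk₂ ℝ (fun a b => ip ((τ a : Oo) : V) ((τ b : Oo) : V)) ?_ ?_ ?_ ?_,
      fun a b => rfl⟩
    · intro a a' b; simp [map_add]
    · intro r a b; simp
    · intro a b b'; simp [map_add]
    · intro r a b; simp
  have hIOzero : ∀ u : V, u ∈ I → ∀ w : V, w ∈ Oo → ip u w = 0 := by
    intro u hu w hw
    exact hw u hu
  have hipQm : ∀ x y : Oo, ipQ (Submodule.Quotient.mk x) (Submodule.Quotient.mk y) =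
      ip (x : V) (y : V) := by
    intro x y
    have h := hipQ0 (KK.mkQ x) (KK.mkQ y)
    simp only [Submodule.mkQ_apply] at h
    rw [h]
    have hd1 := hτmem x
    have hd2 := hτmem y
    set d1 := τ (KK.mkQ x) - x with hd1def
    set d2 := τ (KK.mkQ y) - y with hd2def
    have e1 : ((τ (KK.mkQ x) : Oo) : V) = (x : V) + (d1 : V) := by
      rw [hd1def]; push_cast; abel
    have e2 : ((τ (KK.mkQ y) : Oo) : V) = (y : V) + (d2 : V) := by
      rw [hd2def]; push_cast; abel
    have hh1 : ip (d1 : V) (y : V) = 0 := hIOzero _ hd1 _ y.2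
    have hh2 : ip (x : V) (d2 : V) = 0 := by
      rw [hipsymm]; exact hIOzero _ hd2 _ x.2
    have hh3 : ip (d1 : V) (d2 : V) = 0 := hIOzero _ hd1 _ (d2 : Oo).2
    simp only [Submodule.mkQ_apply] at e1 e2
    rw [e1, e2]
    simp only [map_add, LinearMap.add_apply]
    rw [hh1, hh2, hh3]
    ring
  have surj : ∀ a : ↥Oo ⧸ KK, ∃ x : Oo, Submodule.Quotient.mk x = a :=
    Submodule.Quotient.mk_surjective KK
  refine ⟨I, hIid, hIO, hIOV, ?_, hOid, ?_, hmax, ?_, ?_, hrank,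
    ⟨fbar, hfbar, Or.inr hsimple⟩,
    ⟨fQ, ipQ, ?_, hipQm, ?_, ?_, ?_, ?_, ?_, ?_⟩⟩
  · exact fun x hx y hy z => hIOV x hx y (hIO hy) z
  · rw [hOO]; exact hIO
  · intro x h n hn
    show ip n x = 0
    rw [hipsymm]; exact h n hn
  · intro s _ h
    exact hipnondeg s (fun v => by rw [hipsymm]; exact h v)
  · -- fQ compatibility
    intro x y z w hw
    have : w = m x y z := Subtype.ext (by rw [hw, hm])
    rw [this, hfQm]
  · -- antisymmetry 1
    intro a b c
    obtain ⟨x, rfl⟩ := surj a; obtain ⟨y, rfl⟩ := surj b; obtain ⟨z, rfl⟩ := surj c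
    rw [hfQm, hfQm]
    have h : m x y z = - m y x z := Subtype.ext (by simp only [hm, NegMemClass.coe_neg]; exact hA1 _ _ _)
    rw [h, ← Submodule.mkQ_apply, ← Submodule.mkQ_apply, map_neg]
  · -- antisymmetry 2
    intro a b c
    obtain ⟨x, rfl⟩ := surj a; obtain ⟨y, rfl⟩ := surj b; obtain ⟨z, rfl⟩ := surj c
    rw [hfQm, hfQm]
    have h : m x y z = - m x z y := Subtype.ext (by simp only [hm, NegMemClass.coe_neg]; exact hA2 _ _ _)
    rw [h, ← Submodule.mkQ_apply, ← Submodule.mkQ_apply, map_neg]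
  · -- fundamental identity
    intro a b c d e
    obtain ⟨x, rfl⟩ := surj a; obtain ⟨y, rfl⟩ := surj b; obtain ⟨z, rfl⟩ := surj c
    obtain ⟨s, rfl⟩ := surj d; obtain ⟨t, rfl⟩ := surj e
    rw [hfQm z s t, hfQm x y z, hfQm x y s, hfQm x y t, hfQm x y (m z s t),
      hfQm (m x y z) s t, hfQm z (m x y s) t, hfQm z s (m x y t)]
    have h : m x y (m z s t) = m (m x y z) s t + m z (m x y s) t + m z s (m x y t) :=
      Subtype.ext (by simp only [hm, Submodule.coe_add]; exact hFI _ _ _ _ _)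
    rw [h]
    simp only [← Submodule.mkQ_apply, map_add]
  · -- symmetry of ipQ
    intro a b
    obtain ⟨x, rfl⟩ := surj a; obtain ⟨y, rfl⟩ := surj b
    rw [hipQm, hipQm, hipsymm]
  · -- nondegeneracy of ipQ
    intro a ha
    obtain ⟨x, rfl⟩ := surj a
    have hx : (x : V) ∈ LinearMap.BilinForm.orthogonal ip Oo := by
      intro n hn
      show ip n (x : V) = 0
      rw [hipsymm]
      have := ha (Submodule.Quotient.mk ⟨n, hn⟩)
      rwa [hipQm] at this
    rw [hOO] at hx
    exact (Submodule.Quotient.mk_eq_zero _).2 hx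
  · -- invariance of ipQ
    intro a b c d
    obtain ⟨x, rfl⟩ := surj a; obtain ⟨y, rfl⟩ := surj b; obtain ⟨z, rfl⟩ := surj c
    obtain ⟨s, rfl⟩ := surj d
    rw [hfQm x y z, hfQm x y s, hipQm (m x y z) s, hipQm z (m x y s), hm, hm]
    exact hipinv _ _ _ _
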